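/- In the setting of the mosaic permutation test (deterministic tiling {(B_m,G_m)}_{m=1}^M, ε satisfying H_0 and local exchangeability with respect to the tiling, deterministic matrices H_m ∈ R^{|G_m|×|G_m|}, mosaic residuals ε̃^{(0)} := ε̂ defined by ε̂_{B_m,G_m} = ε_{(m)} H_m, and permuted residuals ε̃^{(r)}_{B_m,G_m} = P_m^{(r)} ε_{(m)} H_m for i.i.d. uniformly random permutation matrices P_m^{(r)} independent of ε, r = 1,…,R), let f : (R^{T×p})^{R+1} → R be any measurable 'meta test-statistic'. Let π_1,…,π_K be i.i.d. uniformly random permutations of {0,1,…,R}, independent of everything else. Then the adaptive p-value p_adaptive = (1 + Σ_{ℓ=1}^K 1{ f(ε̃^{(0)},…,ε̃^{(R)}) ≤ f(ε̃^{(π_ℓ(0))},…,ε̃^{(π_ℓ(R))}) })/(K+1) satisfies P(p_adaptive ≤ α) ≤ α for every α ∈ (0,1). -/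

import Mathlib

open MeasureTheory ProbabilityTheory

instance permMeasurableSpace {α : Type*} : MeasurableSpace (Equiv.Perm α) := ⊤

/-- The uniform probability measure on the permutations of a finite type. -/
noncomputable def uniformPermMeasure (α : Type*) [Fintype α] [DecidableEq α] :
    Measure (Equiv.Perm α) :=
  haveI : Nonempty (Equiv.Perm α) := ⟨1⟩
  (PMF.uniformOfFintype (Equiv.Perm α)).toMeasure

open scoped ENNReal

instance permMeasurableSingleton {α : Type*} : MeasurableSingletonClass (Equiv.Perm α) :=
  ⟨fun _ => MeasurableSpace.measurableSet_top⟩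

namespace AdaptiveMosaicAux

variable {T p M R : ℕ}
variable (B : Fin M → Finset (Fin T)) (G : Fin M → Finset (Fin p))
  (tile : Fin T → Fin p → Fin M)
  (hB : ∀ t j, t ∈ B (tile t j)) (hG : ∀ t j, j ∈ G (tile t j))
  (huniq : ∀ m t j, t ∈ B m → j ∈ G m → m = tile t j)
  (H : (m : Fin M) → Matrix {j : Fin p // j ∈ G m} {j : Fin p // j ∈ G m} ℝ)

/-- apply a family of within-tile row permutations to a matrix -/
def applyP (q : (m : Fin M) → Equiv.Perm {t : Fin T // t ∈ B m})
    (x : Fin T → Fin p → ℝ) : Fin T → Fin p → ℝ :=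
  fun t j => x (q (tile t j) ⟨t, hB t j⟩).1 j

/-- the mosaic residual transform -/
def hmap (x : Fin T → Fin p → ℝ) : Fin T → Fin p → ℝ :=
  fun t j => ∑ j' : {y : Fin p // y ∈ G (tile t j)}, x t j'.1 * H (tile t j) j' ⟨j, hG t j⟩

lemma applyP_eq (q : (m : Fin M) → Equiv.Perm {t : Fin T // t ∈ B m})
    (x : Fin T → Fin p → ℝ) {t : Fin T} {j : Fin p} {m : Fin M}
    (hm : tile t j = m) (ht : t ∈ B m) :
    applyP B tile hB q x t j = x (q m ⟨t, ht⟩).1 j := by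
  subst hm; rfl

lemma hmap_eq (x : Fin T → Fin p → ℝ) {t : Fin T} {j : Fin p} {m : Fin M}
    (hm : tile t j = m) (hj : j ∈ G m) :
    hmap G tile hG H x t j
      = ∑ j' : {y : Fin p // y ∈ G m}, x t j'.1 * H m j' ⟨j, hj⟩ := by
  subst hm; rfl

include hG huniq in
lemma tile_applyP (q : (m : Fin M) → Equiv.Perm {t : Fin T // t ∈ B m}) (t : Fin T) (j : Fin p) :
    tile (q (tile t j) ⟨t, hB t j⟩).1 j = tile t j :=
  (huniq (tile t j) (q (tile t j) ⟨t, hB t j⟩).1 j (q (tile t j) ⟨t, hB t j⟩).2 (hG t j)).symm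

lemma applyP_one (x : Fin T → Fin p → ℝ) :
    applyP B tile hB (fun _ => 1) x = x := by
  funext t j; simp [applyP]

include hG huniq in
lemma applyP_applyP (a b : (m : Fin M) → Equiv.Perm {t : Fin T // t ∈ B m})
    (x : Fin T → Fin p → ℝ) :
    applyP B tile hB a (applyP B tile hB b x)
      = applyP B tile hB (fun m => b m * a m) x := by
  funext t j
  have h1 : applyP B tile hB a (applyP B tile hB b x) t j
      = applyP B tile hB b x (a (tile t j) ⟨t, hB t j⟩).1 j := rfl
  rw [h1, applyP_eq B tile hB b x (tile_applyP B G tile hB hG huniq a t j)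
      (a (tile t j) ⟨t, hB t j⟩).2]
  rfl

include huniq in
lemma hmap_applyP (q : (m : Fin M) → Equiv.Perm {t : Fin T // t ∈ B m})
    (x : Fin T → Fin p → ℝ) :
    hmap G tile hG H (applyP B tile hB q x) = applyP B tile hB q (hmap G tile hG H x) := by
  funext t j
  have h1 : applyP B tile hB q (hmap G tile hG H x) t j
      = hmap G tile hG H x (q (tile t j) ⟨t, hB t j⟩).1 j := rfl
  rw [h1, hmap_eq G tile hG H x (tile_applyP B G tile hB hG huniq q t j) (hG t j)]
  show (∑ j' : {y : Fin p // y ∈ G (tile t j)},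
      applyP B tile hB q x t j'.1 * H (tile t j) j' ⟨j, hG t j⟩) = _
  refine Finset.sum_congr rfl fun j' _ => ?_
  have hm : tile t j'.1 = tile t j := (huniq (tile t j) t j'.1 (hB t j) j'.2).symm
  rw [applyP_eq B tile hB q x hm (hB t j)]


/-- the family of row permutations used at round `r` (identity at `r = 0`) -/
def Pfam (q : (mr : Fin M × Fin R) → Equiv.Perm {t : Fin T // t ∈ B mr.1})
    (r : Fin (R + 1)) : (m : Fin M) → Equiv.Perm {t : Fin T // t ∈ B m} :=
  Fin.cases (fun _ => 1) (fun r' m => q (m, r')) r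

/-- the tuple of residual matrices -/
def Xfun (q : (mr : Fin M × Fin R) → Equiv.Perm {t : Fin T // t ∈ B mr.1})
    (x : Fin T → Fin p → ℝ) : Fin (R + 1) → Fin T → Fin p → ℝ :=
  fun r => applyP B tile hB (Pfam B q r) (hmap G tile hG H x)

/-- rerandomization map on permutation families induced by a permutation `g` of rounds -/
def Phi (g : Equiv.Perm (Fin (R + 1)))
    (q : (mr : Fin M × Fin R) → Equiv.Perm {t : Fin T // t ∈ B mr.1}) :
    (mr : Fin M × Fin R) → Equiv.Perm {t : Fin T // t ∈ B mr.1} :=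
  fun mr => (Pfam B q (g 0) mr.1)⁻¹ * Pfam B q (g mr.2.succ) mr.1

def PhiInv (g : Equiv.Perm (Fin (R + 1)))
    (q : (mr : Fin M × Fin R) → Equiv.Perm {t : Fin T // t ∈ B mr.1}) :
    (mr : Fin M × Fin R) → Equiv.Perm {t : Fin T // t ∈ B mr.1} :=
  fun mr => (Pfam B q (g⁻¹ 0) mr.1)⁻¹ * Pfam B q (g⁻¹ mr.2.succ) mr.1

lemma Pfam_zero (q) : Pfam B q (0 : Fin (R + 1)) = fun _ => 1 := rfl

lemma Pfam_succ (q) (r' : Fin R) : Pfam B q r'.succ = fun m => q (m, r') := by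
  funext m; simp [Pfam]

lemma Pfam_Phi (g : Equiv.Perm (Fin (R + 1))) (q) (r : Fin (R + 1)) (m : Fin M) :
    Pfam B (Phi B g q) r m = (Pfam B q (g 0) m)⁻¹ * Pfam B q (g r) m := by
  induction r using Fin.cases with
  | zero => simp [Pfam]
  | succ r' => simp [Pfam_succ, Phi]

lemma Pfam_PhiInv (g : Equiv.Perm (Fin (R + 1))) (q) (r : Fin (R + 1)) (m : Fin M) :
    Pfam B (PhiInv B g q) r m = (Pfam B q (g⁻¹ 0) m)⁻¹ * Pfam B q (g⁻¹ r) m := by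
  induction r using Fin.cases with
  | zero => simp [Pfam]
  | succ r' => simp [Pfam_succ, PhiInv]

lemma PhiInv_Phi (g : Equiv.Perm (Fin (R + 1))) (q) :
    PhiInv B g (Phi B g q) = q := by
  funext mr
  simp only [PhiInv, Pfam_Phi, Equiv.apply_symm_apply]
  have h0 : Pfam B q (0 : Fin (R+1)) mr.1 = 1 := rfl
  simp [h0, mul_assoc, Pfam_succ]

lemma Phi_PhiInv (g : Equiv.Perm (Fin (R + 1))) (q) :
    Phi B g (PhiInv B g q) = q := by
  funext mr
  simp only [Phi, Pfam_PhiInv, Equiv.symm_apply_apply]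
  have h0 : Pfam B q (0 : Fin (R+1)) mr.1 = 1 := rfl
  simp [h0, mul_assoc, Pfam_succ]

/-- `Phi` as an equivalence -/
def PhiEquiv (g : Equiv.Perm (Fin (R + 1))) :
    ((mr : Fin M × Fin R) → Equiv.Perm {t : Fin T // t ∈ B mr.1}) ≃
      ((mr : Fin M × Fin R) → Equiv.Perm {t : Fin T // t ∈ B mr.1}) where
  toFun := Phi B g
  invFun := PhiInv B g
  left_inv := PhiInv_Phi B g
  right_inv := Phi_PhiInv B g

include hG huniq in
/-- key identity: reordering the rounds of the residual tuple -/
lemma Xfun_comp (g : Equiv.Perm (Fin (R + 1))) (q) (x) (r : Fin (R + 1)) :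
    Xfun B G tile hB hG H q x (g r)
      = Xfun B G tile hB hG H (Phi B g q) (applyP B tile hB (Pfam B q (g 0)) x) r := by
  show applyP B tile hB (Pfam B q (g r)) (hmap G tile hG H x)
      = applyP B tile hB (Pfam B (Phi B g q) r)
          (hmap G tile hG H (applyP B tile hB (Pfam B q (g 0)) x))
  rw [hmap_applyP B G tile hB hG huniq H, applyP_applyP B G tile hB hG huniq]
  have : (fun m => Pfam B q (g 0) m * Pfam B (Phi B g q) r m) = Pfam B q (g r) := by
    funext m; rw [Pfam_Phi]; group
  rw [this]


lemma measurable_entry (t : Fin T) (j : Fin p) :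
    Measurable (fun x : Fin T → Fin p → ℝ => x t j) :=
  (measurable_pi_apply j).comp (measurable_pi_apply t)

lemma measurable_applyP (q : (m : Fin M) → Equiv.Perm {t : Fin T // t ∈ B m}) :
    Measurable (applyP B tile hB q) :=
  measurable_pi_lambda _ fun t => measurable_pi_lambda _ fun j => measurable_entry _ _

lemma measurable_hmap : Measurable (hmap G tile hG H) :=
  measurable_pi_lambda _ fun t => measurable_pi_lambda _ fun j =>
    Finset.measurable_sum _ fun j' _ => (measurable_entry t j'.1).mul_const _

lemma measurable_Xfun_apply (q) (r : Fin (R + 1)) :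
    Measurable (fun x => Xfun B G tile hB hG H q x r) :=
  (measurable_applyP B tile hB _).comp (measurable_hmap G tile hG H)

/-- the row permutation induced on column `j` by a family of within-tile permutations -/
noncomputable def sigmaCol (hG : ∀ t j, j ∈ G (tile t j))
    (huniq : ∀ m t j, t ∈ B m → j ∈ G m → m = tile t j)
    (u : (m : Fin M) → Equiv.Perm {t : Fin T // t ∈ B m})
    (j : Fin p) : Equiv.Perm (Fin T) :=
  Equiv.ofBijective (fun t => (u (tile t j) ⟨t, hB t j⟩).1) (by
    rw [Finite.injective_iff_bijective.symm]
    intro t1 t2 h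
    dsimp only at h
    have hm : tile t1 j = tile t2 j := by
      have e1 := tile_applyP B G tile hB hG huniq u t1 j
      have e2 := tile_applyP B G tile hB hG huniq u t2 j
      rw [← e1, ← e2, h]
    have ht2 : t2 ∈ B (tile t1 j) := hm ▸ hB t2 j
    have key : ∀ (t : Fin T) (m : Fin M) (hm' : tile t j = m) (ht : t ∈ B m),
        ((u (tile t j)) ⟨t, hB t j⟩).1 = ((u m) ⟨t, ht⟩).1 := by
      intro t m hm' ht; subst hm'; rfl
    rw [key t2 (tile t1 j) hm.symm ht2] at h
    have := (u (tile t1 j)).injective (Subtype.ext h)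
    exact congrArg Subtype.val this)

lemma sigmaCol_apply (hG) (huniq) (u) (j : Fin p) (t : Fin T) :
    sigmaCol B G tile hB hG huniq u j t = (u (tile t j) ⟨t, hB t j⟩).1 := rfl

lemma tile_sigmaCol (hG) (huniq) (u) (j : Fin p) (t : Fin T) :
    tile (sigmaCol B G tile hB hG huniq u j t) j = tile t j :=
  tile_applyP B G tile hB hG huniq u t j

include hG huniq in
/-- **Lemma A**: the law of `ε` is invariant under any deterministic family of
within-tile row permutations, given `H₀` and local exchangeability. -/
lemma mapA {Ω : Type*} [MeasurableSpace Ω] (μ : Measure Ω) [IsProbabilityMeasure μ]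
    (ε : Ω → Fin T → Fin p → ℝ) (hmeas : Measurable ε)
    (hcol_indep : iIndepFun (fun j ω => fun t => ε ω t j) μ)
    (hlocexch : ∀ (j : Fin p) (π : Equiv.Perm (Fin T)), (∀ t, tile (π t) j = tile t j) →
      Measure.map (fun ω => fun t => ε ω (π t) j) μ =
        Measure.map (fun ω => fun t => ε ω t j) μ)
    (u : (m : Fin M) → Equiv.Perm {t : Fin T // t ∈ B m}) :
    Measure.map (applyP B tile hB u) (Measure.map ε μ) = Measure.map ε μ := by
  classical
  set σ : Fin p → Equiv.Perm (Fin T) := sigmaCol B G tile hB hG huniq u with hσ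
  have hcolmeas : ∀ j : Fin p, Measurable (fun ω => fun t => ε ω t j) := fun j =>
    measurable_pi_lambda _ fun t => (measurable_entry t j).comp hmeas
  set μj : Fin p → Measure (Fin T → ℝ) := fun j => Measure.map (fun ω => fun t => ε ω t j) μ
    with hμj
  haveI : ∀ j, IsProbabilityMeasure (μj j) := fun j =>
    Measure.isProbabilityMeasure_map (hcolmeas j).aemeasurable
  have hYmeas : Measurable (fun ω => fun (j : Fin p) (t : Fin T) => ε ω t j) :=
    measurable_pi_lambda _ fun j => hcolmeas j
  -- step 1 : joint law of columns is the product of the column laws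
  have hYpi : Measure.map (fun ω => fun (j : Fin p) (t : Fin T) => ε ω t j) μ
      = Measure.pi μj := by
    refine (Measure.pi_eq fun s hs => ?_).symm
    rw [Measure.map_apply hYmeas (MeasurableSet.univ_pi hs)]
    have hpre : (fun ω => fun (j : Fin p) (t : Fin T) => ε ω t j) ⁻¹' Set.univ.pi s
        = ⋂ j ∈ Finset.univ, (fun ω => fun t => ε ω t j) ⁻¹' s j := by
      ext ω; simp [Set.mem_pi]
    rw [hpre, hcol_indep.measure_inter_preimage_eq_mul Finset.univ (fun i _ => hs i)]
    exact Finset.prod_congr rfl fun j _ => (Measure.map_apply (hcolmeas j) (hs j)).symm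
  -- per-column invariance
  have hcomp : ∀ j : Fin p, Measurable (fun (y : Fin T → ℝ) => fun t => y (σ j t)) := fun j =>
    measurable_pi_lambda _ fun t => measurable_pi_apply _
  have hinvj : ∀ j : Fin p,
      Measure.map (fun (y : Fin T → ℝ) => fun t => y (σ j t)) (μj j) = μj j := by
    intro j
    rw [hμj, Measure.map_map (hcomp j) (hcolmeas j)]
    exact hlocexch j (σ j) (tile_sigmaCol B G tile hB hG huniq u j)
  -- step 2 : product law invariant under per-column permutations
  set Fmap : (Fin p → Fin T → ℝ) → (Fin p → Fin T → ℝ) :=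
    fun y => fun j => fun t => y j (σ j t) with hFmap
  have hFmeas : Measurable Fmap :=
    measurable_pi_lambda _ fun j => (hcomp j).comp (measurable_pi_apply j)
  have hFpi : Measure.map Fmap (Measure.pi μj) = Measure.pi μj := by
    refine (Measure.pi_eq fun s hs => ?_).symm
    rw [Measure.map_apply hFmeas (MeasurableSet.univ_pi hs)]
    have hpre : Fmap ⁻¹' Set.univ.pi s
        = Set.univ.pi (fun j => (fun (y : Fin T → ℝ) => fun t => y (σ j t)) ⁻¹' s j) := by
      ext y; simp [Set.mem_pi, hFmap]
    rw [hpre, Measure.pi_pi]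
    refine Finset.prod_congr rfl fun j _ => ?_
    rw [← Measure.map_apply (hcomp j) (hs j), hinvj j]
  -- step 3 : assemble via transposition
  set tr : (Fin p → Fin T → ℝ) → (Fin T → Fin p → ℝ) := fun y => fun t j => y j t with htr
  have htrmeas : Measurable tr :=
    measurable_pi_lambda _ fun t => measurable_pi_lambda _ fun j =>
      (measurable_pi_apply t).comp (measurable_pi_apply j)
  have h1 : Measure.map ε μ = Measure.map tr (Measure.pi μj) := by
    rw [← hYpi, Measure.map_map htrmeas hYmeas]; rfl
  have hcommute : applyP B tile hB u ∘ tr = tr ∘ Fmap := rfl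
  rw [h1, Measure.map_map (measurable_applyP B tile hB u) htrmeas, hcommute,
    ← Measure.map_map htrmeas hFmeas, hFpi]


end AdaptiveMosaicAux

namespace AdaptiveMosaicAux
lemma measurable_uncurry_countable {A B C : Type*} [MeasurableSpace A] [MeasurableSpace B]
    [MeasurableSpace C] [Countable A] [MeasurableSingletonClass A] {g : A × B → C}
    (hg : ∀ a, Measurable fun b => g (a, b)) : Measurable g := by
  have h : Measurable fun w : B × A => g (w.2, w.1) :=
    measurable_from_prod_countable_left (fun a => hg a)
  exact h.comp measurable_swap

lemma card_filter_comp_equiv {β : Type*} [Fintype β] (e : Equiv.Perm β)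
    (Q : β → Prop) [DecidablePred Q] :
    (Finset.univ.filter fun b => Q (e b)).card = (Finset.univ.filter Q).card := by
  apply Finset.card_bij (fun b _ => e b)
  · intro a ha; simp only [Finset.mem_filter, Finset.mem_univ, true_and] at ha ⊢; exact ha
  · intro a _ b _ hab; exact e.injective hab
  · intro b hb
    refine ⟨e.symm b, ?_, by simp⟩
    simp only [Finset.mem_filter, Finset.mem_univ, true_and, Equiv.apply_symm_apply] at hb ⊢
    exact hb

lemma card_filter_real {β : Type*} [Fintype β] (P : β → Prop) [DecidablePred P] :
    ((Finset.univ.filter P).card : ℝ) = ∑ b : β, if P b then (1:ℝ) else 0 := by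
  rw [Finset.card_filter, Nat.cast_sum]
  exact Finset.sum_congr rfl fun b _ => by split <;> simp

/-- rank of index `i` in the vector `w` (number of entries ≥ `w i`, inclusive) -/
noncomputable def rnk {K : ℕ} (w : Fin (K + 1) → ℝ) (i : Fin (K + 1)) : ℕ :=
  (Finset.univ.filter fun i' => w i ≤ w i').card

lemma rank_count {K : ℕ} (w : Fin (K + 1) → ℝ) (c : ℝ) (hc : 0 ≤ c) :
    ((Finset.univ.filter fun i : Fin (K + 1) => (rnk w i : ℝ) ≤ c).card : ℝ) ≤ c := by
  set S := Finset.univ.filter fun i : Fin (K + 1) => (rnk w i : ℝ) ≤ c with hS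
  rcases S.eq_empty_or_nonempty with h | h
  · rw [h]; simpa using hc
  · obtain ⟨i₀, hi₀, hmin⟩ := S.exists_min_image w h
    have hsub : S ⊆ Finset.univ.filter fun i' => w i₀ ≤ w i' := by
      intro i hi
      simp only [Finset.mem_filter, Finset.mem_univ, true_and]
      exact hmin i hi
    have h1 : (S.card : ℝ) ≤ (rnk w i₀ : ℝ) := by
      exact_mod_cast Finset.card_le_card hsub
    have h2 : (rnk w i₀ : ℝ) ≤ c := by
      simp only [hS, Finset.mem_filter] at hi₀; exact hi₀.2
    linarith

lemma rnk_comp_swap {K : ℕ} (w : Fin (K + 1) → ℝ) (i : Fin (K + 1)) :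
    rnk (w ∘ Equiv.swap 0 i) 0 = rnk w i := by
  unfold rnk
  rw [Finset.filter_congr (q := fun i' => w i ≤ w (Equiv.swap 0 i i'))
      (fun x _ => by simp [Equiv.swap_apply_left])]
  exact card_filter_comp_equiv (Equiv.swap 0 i) (fun i' => w i ≤ w i')

/-- symmetrized counting bound over tuples of group elements -/
lemma sym_count {Γ : Type*} [Fintype Γ] {K : ℕ} (v : Γ → ℝ) (c : ℝ) (hc : 0 ≤ c) :
    ((Finset.univ.filter fun s : Fin (K + 1) → Γ =>
        (rnk (v ∘ s) 0 : ℝ) ≤ c).card : ℝ) * (K + 1)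
      ≤ c * (Fintype.card Γ) ^ (K + 1) := by
  classical
  have hswap : ∀ i : Fin (K + 1),
      (Finset.univ.filter fun s : Fin (K + 1) → Γ => (rnk (v ∘ s) i : ℝ) ≤ c).card
        = (Finset.univ.filter fun s : Fin (K + 1) → Γ => (rnk (v ∘ s) 0 : ℝ) ≤ c).card := by
    intro i
    set e : (Fin (K + 1) → Γ) ≃ (Fin (K + 1) → Γ) :=
      (Equiv.swap (0 : Fin (K + 1)) i).arrowCongr (Equiv.refl Γ) with he
    have harr : ∀ s : Fin (K + 1) → Γ, e s = s ∘ (Equiv.swap 0 i) := by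
      intro s; funext i'
      simp [he, Equiv.arrowCongr, Equiv.symm_swap]
    have hiff : ∀ s : Fin (K + 1) → Γ,
        ((rnk (v ∘ s) i : ℝ) ≤ c) ↔ ((rnk (v ∘ e s) 0 : ℝ) ≤ c) := by
      intro s
      rw [harr s, show v ∘ (s ∘ Equiv.swap 0 i) = (v ∘ s) ∘ Equiv.swap 0 i from rfl,
        rnk_comp_swap]
    calc (Finset.univ.filter fun s : Fin (K + 1) → Γ => (rnk (v ∘ s) i : ℝ) ≤ c).card
        = (Finset.univ.filter fun s => (rnk (v ∘ e s) 0 : ℝ) ≤ c).card := by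
          rw [Finset.filter_congr (fun s _ => hiff s)]
      _ = (Finset.univ.filter fun s : Fin (K + 1) → Γ => (rnk (v ∘ s) 0 : ℝ) ≤ c).card :=
          card_filter_comp_equiv e (fun s => (rnk (v ∘ s) 0 : ℝ) ≤ c)
  have hdouble :
      ((Finset.univ.filter fun s : Fin (K + 1) → Γ =>
        (rnk (v ∘ s) 0 : ℝ) ≤ c).card : ℝ) * (K + 1)
      = ∑ s : Fin (K + 1) → Γ,
          ((Finset.univ.filter fun i : Fin (K + 1) => (rnk (v ∘ s) i : ℝ) ≤ c).card : ℝ) := by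
    calc ((Finset.univ.filter fun s : Fin (K + 1) → Γ =>
            (rnk (v ∘ s) 0 : ℝ) ≤ c).card : ℝ) * (K + 1)
        = ∑ i : Fin (K + 1), ((Finset.univ.filter fun s : Fin (K + 1) → Γ =>
            (rnk (v ∘ s) i : ℝ) ≤ c).card : ℝ) := by
          rw [Finset.sum_congr rfl fun i _ => by rw [hswap i]]
          simp [Finset.sum_const, mul_comm]
      _ = ∑ i : Fin (K + 1), ∑ s : Fin (K + 1) → Γ,
            (if (rnk (v ∘ s) i : ℝ) ≤ c then (1:ℝ) else 0) :=
          Finset.sum_congr rfl fun i _ => card_filter_real _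
      _ = ∑ s : Fin (K + 1) → Γ, ∑ i : Fin (K + 1),
            (if (rnk (v ∘ s) i : ℝ) ≤ c then (1:ℝ) else 0) := Finset.sum_comm
      _ = _ := Finset.sum_congr rfl fun s _ => (card_filter_real _).symm
  rw [hdouble]
  calc (∑ s : Fin (K + 1) → Γ,
          ((Finset.univ.filter fun i : Fin (K + 1) => (rnk (v ∘ s) i : ℝ) ≤ c).card : ℝ))
      ≤ ∑ _s : Fin (K + 1) → Γ, c :=
        Finset.sum_le_sum fun s _ => rank_count (v ∘ s) c hc
    _ = c * (Fintype.card Γ) ^ (K + 1) := by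
        rw [Finset.sum_const]
        simp [Fintype.card_fun, mul_comm]

instance uniformPermMeasure_isProb (α : Type*) [Fintype α] [DecidableEq α] :
    IsProbabilityMeasure (uniformPermMeasure α) := by
  unfold uniformPermMeasure
  infer_instance

lemma uniformPermMeasure_singleton {α : Type*} [Fintype α] [DecidableEq α]
    (g : Equiv.Perm α) :
    uniformPermMeasure α {g} = ((Fintype.card (Equiv.Perm α) : ℝ≥0∞))⁻¹ := by
  haveI : Nonempty (Equiv.Perm α) := ⟨1⟩
  unfold uniformPermMeasure
  rw [PMF.toMeasure_apply_singleton _ _ (measurableSet_singleton g),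
    PMF.uniformOfFintype_apply]

lemma prod_apply_countable {A : Type*} [MeasurableSpace A] [Fintype A]
    [MeasurableSingletonClass A] {β : Type*} [MeasurableSpace β]
    (μ1 : Measure A) (μ2 : Measure β) [SFinite μ2] {S : Set (A × β)}
    (hS : MeasurableSet S) :
    (μ1.prod μ2) S = ∑ a : A, μ2 {b | (a, b) ∈ S} * μ1 {a} := by
  rw [Measure.prod_apply hS, lintegral_countable', tsum_fintype]
  rfl

lemma pi_singleton_mass {ι : Type*} [Fintype ι] {β : ι → Type*}
    [∀ i, MeasurableSpace (β i)] [∀ i, MeasurableSingletonClass (β i)]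
    (μi : (i : ι) → Measure (β i)) [∀ i, SigmaFinite (μi i)] (g : ∀ i, β i) :
    Measure.pi μi {g} = ∏ i, μi i {g i} := by
  rw [← Set.univ_pi_singleton g, Measure.pi_pi]

lemma sum_singleton_eq_univ {A : Type*} [MeasurableSpace A] [Fintype A]
    [MeasurableSingletonClass A] (μ : Measure A) :
    ∑ a : A, μ {a} = μ Set.univ := by
  classical
  have : (Set.univ : Set A) = ⋃ a ∈ (Finset.univ : Finset A), {a} := by ext; simp
  rw [this, measure_biUnion_finset ?_ (fun a _ => measurableSet_singleton a)]
  · intro a _ b _ hab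
    simp [Function.onFun, Set.disjoint_singleton, hab]


end AdaptiveMosaicAux

open AdaptiveMosaicAux

/-- **validity of the adaptive mosaic p-value.** In the mosaic permutation
test setting (deterministic tiling, `ε` satisfying `H₀` and local exchangeability,
deterministic matrices `H m`, mosaic residuals `ε̃⁽⁰⁾ := ε̂` and permuted variants
`ε̃⁽ʳ⁾` built from i.i.d. uniformly random within-tile row permutations independent of `ε`),
for any measurable meta test-statistic `f` and i.i.d. uniformly random permutations
`π₁, …, π_K` of `{0, …, R}` independent of everything else, the adaptive p-value
`p_adaptive = (1 + ∑_ℓ 1{f(ε̃⁽⁰⁾,…,ε̃⁽ᴿ⁾) ≤ f(ε̃^{(π_ℓ(0))},…,ε̃^{(π_ℓ(R))})})/(K+1)`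
satisfies `P(p_adaptive ≤ α) ≤ α` for every `α ∈ (0,1)`. -/
theorem adaptive_mosaic_pvalue_valid
    {Ω : Type*} [MeasurableSpace Ω] (μ : Measure Ω) [IsProbabilityMeasure μ]
    (T p M R K : ℕ) (ε : Ω → Fin T → Fin p → ℝ) (hmeas : Measurable ε)
    -- the tiling: every `(t, j)` lies in exactly one rectangle `B m × G m`,
    -- namely the one indexed by `tile t j`:
    (B : Fin M → Finset (Fin T)) (G : Fin M → Finset (Fin p))
    (tile : Fin T → Fin p → Fin M)
    (hB : ∀ t j, t ∈ B (tile t j)) (hG : ∀ t j, j ∈ G (tile t j))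
    (huniq : ∀ m t j, t ∈ B m → j ∈ G m → m = tile t j)
    -- `H₀`: the columns of `ε` are jointly independent:
    (hcol_indep : iIndepFun (fun j ω => fun t => ε ω t j) μ)
    -- local exchangeability of `ε` with respect to the tiling:
    (hlocexch : ∀ (j : Fin p) (π : Equiv.Perm (Fin T)), (∀ t, tile (π t) j = tile t j) →
      Measure.map (fun ω => fun t => ε ω (π t) j) μ =
        Measure.map (fun ω => fun t => ε ω t j) μ)
    -- deterministic matrices `H m ∈ ℝ^{|G m| × |G m|}`:
    (H : (m : Fin M) → Matrix {j : Fin p // j ∈ G m} {j : Fin p // j ∈ G m} ℝ)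
    -- the mosaic residual matrix `ε̂` with `ε̂_{B_m, G_m} := ε_(m) H_m`:
    (εh : Ω → Fin T → Fin p → ℝ)
    (hεh : ∀ ω t j, εh ω t j =
      ∑ j' : {x : Fin p // x ∈ G (tile t j)}, ε ω t j'.1 * H (tile t j) j' ⟨j, hG t j⟩)
    -- the i.i.d. uniformly random within-tile row permutations, independent of `ε`:
    (π : (m : Fin M) → Fin R → Ω → Equiv.Perm {t : Fin T // t ∈ B m})
    (hπmeas : ∀ m r, Measurable (π m r))
    (hπ : Measure.map (fun ω => ((fun mr : Fin M × Fin R => π mr.1 mr.2 ω), ε ω)) μ =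
      (Measure.pi fun mr : Fin M × Fin R =>
        uniformPermMeasure {t : Fin T // t ∈ B mr.1}).prod (Measure.map ε μ))
    -- the permuted residual matrices, with `ε̃⁽⁰⁾ = ε̂`:
    (εt : Fin (R + 1) → Ω → Fin T → Fin p → ℝ)
    (hεt0 : ∀ ω, εt 0 ω = εh ω)
    (hεt : ∀ (r : Fin R) ω, εt r.succ ω =
      fun t j => εh ω (π (tile t j) r ω ⟨t, hB t j⟩).1 j)
    -- an arbitrary measurable meta test-statistic on `(R+1)`-tuples of matrices:
    (f : (Fin (R + 1) → Fin T → Fin p → ℝ) → ℝ) (hf : Measurable f)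
    -- the i.i.d. uniformly random permutations of `{0, …, R}`, independent of everything:
    (τ : Fin K → Ω → Equiv.Perm (Fin (R + 1)))
    (hτmeas : ∀ l, Measurable (τ l))
    (hτ : Measure.map
        (fun ω => ((fun l => τ l ω),
          ((fun mr : Fin M × Fin R => π mr.1 mr.2 ω), ε ω))) μ =
      (Measure.pi fun _ : Fin K => uniformPermMeasure (Fin (R + 1))).prod
        (Measure.map (fun ω => ((fun mr : Fin M × Fin R => π mr.1 mr.2 ω), ε ω)) μ)) :
    ∀ α ∈ Set.Ioo (0 : ℝ) 1,
      μ {ω | (1 + ∑ l : Fin K,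
          if f (fun r => εt r ω) ≤ f (fun r => εt (τ l ω r) ω) then (1 : ℝ) else 0) / (K + 1)
        ≤ α} ≤ ENNReal.ofReal α := by
  classical
  rintro α ⟨hα0, hα1⟩
  open AdaptiveMosaicAux in
  -- canonical measures
  set μx : Measure (Fin T → Fin p → ℝ) := Measure.map ε μ with hμx
  haveI : IsProbabilityMeasure μx := Measure.isProbabilityMeasure_map hmeas.aemeasurable
  set Ppi : Measure ((mr : Fin M × Fin R) → Equiv.Perm {t : Fin T // t ∈ B mr.1}) :=
    Measure.pi fun mr : Fin M × Fin R => uniformPermMeasure {t : Fin T // t ∈ B mr.1}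
    with hPpi
  set Tpi : Measure (Fin K → Equiv.Perm (Fin (R + 1))) :=
    Measure.pi fun _ : Fin K => uniformPermMeasure (Fin (R + 1)) with hTpi
  -- the residual tuple as a function of the canonical coordinates
  have hXf : ∀ ω (r : Fin (R + 1)),
      εt r ω = Xfun B G tile hB hG H (fun mr => π mr.1 mr.2 ω) (ε ω) r := by
    intro ω r
    induction r using Fin.cases with
    | zero =>
      rw [hεt0]
      show εh ω = applyP B tile hB (Pfam B (fun mr => π mr.1 mr.2 ω) 0)
        (hmap G tile hG H (ε ω))
      rw [Pfam_zero, applyP_one]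
      funext t j; rw [hεh]; rfl
    | succ r' =>
      rw [hεt r' ω]
      show _ = applyP B tile hB (Pfam B (fun mr => π mr.1 mr.2 ω) r'.succ)
        (hmap G tile hG H (ε ω))
      rw [Pfam_succ]
      have hh : hmap G tile hG H (ε ω) = εh ω := by
        funext t j; rw [hεh]; rfl
      rw [hh]
      rfl
  -- the meta-statistic on the canonical space
  set val : ((mr : Fin M × Fin R) → Equiv.Perm {t : Fin T // t ∈ B mr.1}) →
      (Fin T → Fin p → ℝ) → Equiv.Perm (Fin (R + 1)) → ℝ :=
    fun q x σ => f (fun r => Xfun B G tile hB hG H q x (σ r)) with hval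
  have hvalmeas : ∀ q σ, Measurable (fun x => val q x σ) := fun q σ =>
    hf.comp (measurable_pi_lambda _ fun r => measurable_Xfun_apply B G tile hB hG H q (σ r))
  -- the p-value condition for a pattern of round-permutations
  set CondS : (Fin (K + 1) → Equiv.Perm (Fin (R + 1))) →
      ((mr : Fin M × Fin R) → Equiv.Perm {t : Fin T // t ∈ B mr.1}) →
      (Fin T → Fin p → ℝ) → Prop :=
    fun s q x => (1 + ∑ l : Fin K,
      if val q x (s 0) ≤ val q x (s l.succ) then (1 : ℝ) else 0) / (K + 1) ≤ α with hCondS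
  have hCondSmeas : ∀ s q, MeasurableSet {x | CondS s q x} := by
    intro s q
    apply measurableSet_le _ measurable_const
    apply Measurable.div_const
    apply Measurable.add measurable_const
    refine Finset.measurable_sum _ fun l _ => Measurable.ite ?_ measurable_const
      measurable_const
    exact measurableSet_le (hvalmeas q (s 0)) (hvalmeas q (s l.succ))
  -- the event set on the canonical space
  set Sev : Set ((Fin K → Equiv.Perm (Fin (R + 1))) ×
      (((mr : Fin M × Fin R) → Equiv.Perm {t : Fin T // t ∈ B mr.1}) ×
        (Fin T → Fin p → ℝ))) :=
    {z | (1 + ∑ l : Fin K,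
      if f (fun r => Xfun B G tile hB hG H z.2.1 z.2.2 r)
          ≤ f (fun r => Xfun B G tile hB hG H z.2.1 z.2.2 (z.1 l r)) then (1 : ℝ) else 0)
        / (K + 1) ≤ α} with hSev
  have hSevmeas : MeasurableSet Sev := by
    rw [hSev]
    apply measurableSet_le _ measurable_const
    apply Measurable.div_const
    apply Measurable.add measurable_const
    apply measurable_uncurry_countable
    intro τf
    apply measurable_uncurry_countable
    intro q
    refine Finset.measurable_sum _ fun l _ => Measurable.ite ?_ measurable_const
      measurable_const
    refine measurableSet_le (hf.comp ?_) (hf.comp ?_)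
    · exact measurable_pi_lambda _ fun r => measurable_Xfun_apply B G tile hB hG H q r
    · exact measurable_pi_lambda _ fun r => measurable_Xfun_apply B G tile hB hG H q (τf l r)
  -- transfer the event to the canonical space
  have hZmeas : Measurable (fun ω => ((fun l => τ l ω),
      ((fun mr : Fin M × Fin R => π mr.1 mr.2 ω), ε ω))) :=
    Measurable.prodMk (measurable_pi_lambda _ fun l => hτmeas l)
      (Measurable.prodMk (measurable_pi_lambda _ fun mr => hπmeas mr.1 mr.2) hmeas)
  have hpre : {ω | (1 + ∑ l : Fin K,
      if f (fun r => εt r ω) ≤ f (fun r => εt (τ l ω r) ω) then (1 : ℝ) else 0) / (K + 1)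
        ≤ α} = (fun ω => ((fun l => τ l ω),
          ((fun mr : Fin M × Fin R => π mr.1 mr.2 ω), ε ω))) ⁻¹' Sev := by
    ext ω
    simp only [Set.mem_setOf_eq, Set.mem_preimage, hSev, hXf]
  -- probability instances
  haveI hPpiProb : IsProbabilityMeasure Ppi := by rw [hPpi]; infer_instance
  haveI hTpiProb : IsProbabilityMeasure Tpi := by rw [hTpi]; infer_instance
  -- constants
  set N : ℕ := Fintype.card (Equiv.Perm (Fin (R + 1))) with hN
  have hN0 : (N : ℝ≥0∞) ≠ 0 := by
    haveI : Nonempty (Equiv.Perm (Fin (R + 1))) := ⟨1⟩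
    simp [hN, Fintype.card_ne_zero]
  have hNtop : (N : ℝ≥0∞) ≠ ⊤ := ENNReal.natCast_ne_top N
  set cQ : ℝ≥0∞ := ∏ mr : Fin M × Fin R,
    ((Fintype.card (Equiv.Perm {t : Fin T // t ∈ B mr.1}) : ℝ≥0∞))⁻¹ with hcQ
  have hPpiq : ∀ q, Ppi {q} = cQ := by
    intro q
    rw [hPpi, pi_singleton_mass, hcQ]
    exact Finset.prod_congr rfl fun mr _ => uniformPermMeasure_singleton _
  have hTpiq : ∀ τf : Fin K → Equiv.Perm (Fin (R + 1)),
      Tpi {τf} = ((N : ℝ≥0∞))⁻¹ ^ K := by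
    intro τf
    rw [hTpi, pi_singleton_mass,
      Finset.prod_congr rfl fun l _ => uniformPermMeasure_singleton (τf l)]
    simp [hN, Finset.prod_const]
  set Am : (Fin (K + 1) → Equiv.Perm (Fin (R + 1))) → ℝ≥0∞ :=
    fun s => ∑ q, μx {x | CondS s q x} * cQ with hAm
  -- sections of the event
  have hsec1meas : ∀ τf, MeasurableSet {y : ((mr : Fin M × Fin R) →
      Equiv.Perm {t : Fin T // t ∈ B mr.1}) × (Fin T → Fin p → ℝ) | (τf, y) ∈ Sev} :=
    fun τf => hSevmeas.preimage measurable_prodMk_left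
  have hsec : ∀ τf q, {x | (τf, (q, x)) ∈ Sev} = {x | CondS (Fin.cons 1 τf) q x} := by
    intro τf q
    ext x
    simp only [hSev, hCondS, hval, Set.mem_setOf_eq, Fin.cons_zero, Fin.cons_succ,
      Equiv.Perm.one_apply]
  have hdecomp : (Tpi.prod (Ppi.prod μx)) Sev
      = ∑ τf, Am (Fin.cons 1 τf) * ((N : ℝ≥0∞))⁻¹ ^ K := by
    rw [prod_apply_countable Tpi (Ppi.prod μx) hSevmeas]
    refine Finset.sum_congr rfl fun τf _ => ?_
    rw [hTpiq τf]
    congr 1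
    rw [prod_apply_countable Ppi μx (hsec1meas τf), hAm]
    refine Finset.sum_congr rfl fun q _ => ?_
    rw [hPpiq q]
    congr 1
  -- invariance of `Am` under left multiplication of the pattern
  have hmapAq : ∀ u, Measure.map (applyP B tile hB u) μx = μx := fun u => by
    rw [hμx]; exact mapA B G tile hB hG huniq μ ε hmeas hcol_indep hlocexch u
  have hCinv : ∀ (g : Equiv.Perm (Fin (R + 1))) s, Am (fun i => g * s i) = Am s := by
    intro g s
    have hterm : ∀ q x (i : Fin (K + 1)), val q x (g * s i)
        = val (Phi B g q) (applyP B tile hB (Pfam B q (g 0)) x) (s i) := by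
      intro q x i
      simp only [hval]
      have hfr : (fun r => Xfun B G tile hB hG H q x ((g * s i) r))
          = fun r => Xfun B G tile hB hG H (Phi B g q)
              (applyP B tile hB (Pfam B q (g 0)) x) (s i r) := by
        funext r
        rw [Equiv.Perm.mul_apply]
        exact Xfun_comp B G tile hB hG huniq H g q x (s i r)
      rw [hfr]
    have hsetq : ∀ q, {x | CondS (fun i => g * s i) q x}
        = applyP B tile hB (Pfam B q (g 0)) ⁻¹' {x | CondS s (Phi B g q) x} := by
      intro q
      ext x
      simp only [Set.mem_setOf_eq, Set.mem_preimage, hCondS, hterm]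
    simp only [hAm]
    calc (∑ q, μx {x | CondS (fun i => g * s i) q x} * cQ)
        = ∑ q, μx {x | CondS s (Phi B g q) x} * cQ := by
          refine Finset.sum_congr rfl fun q _ => ?_
          rw [hsetq q, ← Measure.map_apply (measurable_applyP B tile hB _)
            (hCondSmeas s (Phi B g q)), hmapAq _]
      _ = ∑ q, μx {x | CondS s q x} * cQ :=
          Fintype.sum_equiv (PhiEquiv B g) _ _ (fun q => rfl)
  -- symmetrization over the leading permutation
  let eGT : (Equiv.Perm (Fin (R + 1)) × (Fin K → Equiv.Perm (Fin (R + 1))))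
      ≃ (Fin (K + 1) → Equiv.Perm (Fin (R + 1))) :=
    { toFun := fun gτ => fun i =>
        gτ.1 * (Fin.cons 1 gτ.2 : Fin (K + 1) → Equiv.Perm (Fin (R + 1))) i
      invFun := fun s => (s 0, fun l => (s 0)⁻¹ * s l.succ)
      left_inv := fun gτ => by
        obtain ⟨g, τf⟩ := gτ
        refine Prod.ext ?_ ?_
        · show g * (Fin.cons 1 τf : Fin (K + 1) → Equiv.Perm (Fin (R + 1))) 0 = g
          simp
        · funext l
          show (g * (Fin.cons 1 τf : Fin (K + 1) → Equiv.Perm (Fin (R + 1))) 0)⁻¹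
              * (g * (Fin.cons 1 τf : Fin (K + 1) → Equiv.Perm (Fin (R + 1))) l.succ) = τf l
          simp [inv_mul_cancel_left]
      right_inv := fun s => by
        funext i
        show s 0 * (Fin.cons 1 (fun l => (s 0)⁻¹ * s l.succ)
            : Fin (K + 1) → Equiv.Perm (Fin (R + 1))) i = s i
        induction i using Fin.cases with
        | zero => simp
        | succ l => simp [mul_inv_cancel_left] }
  have hres : ∑ s : Fin (K + 1) → Equiv.Perm (Fin (R + 1)), Am s
      = (N : ℝ≥0∞) * ∑ τf, Am (Fin.cons 1 τf) := by
    calc ∑ s : Fin (K + 1) → Equiv.Perm (Fin (R + 1)), Am s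
        = ∑ gτ : Equiv.Perm (Fin (R + 1)) × (Fin K → Equiv.Perm (Fin (R + 1))),
            Am (eGT gτ) := (Fintype.sum_equiv eGT _ _ (fun gτ => rfl)).symm
      _ = ∑ g : Equiv.Perm (Fin (R + 1)), ∑ τf, Am (eGT (g, τf)) := Fintype.sum_prod_type _
      _ = ∑ g : Equiv.Perm (Fin (R + 1)), ∑ τf, Am (Fin.cons 1 τf) :=
          Finset.sum_congr rfl fun g _ => Finset.sum_congr rfl fun τf _ =>
            hCinv g (Fin.cons 1 τf)
      _ = (N : ℝ≥0∞) * ∑ τf, Am (Fin.cons 1 τf) := by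
          rw [Finset.sum_const, Finset.card_univ, ← hN, nsmul_eq_mul]
  -- pointwise counting bound
  have hKpos : (0 : ℝ) < (K : ℝ) + 1 := by positivity
  have hcount : ∀ q x, ((Finset.univ.filter fun s : Fin (K + 1) → Equiv.Perm (Fin (R + 1)) =>
      CondS s q x).card : ℝ) ≤ α * (N : ℝ) ^ (K + 1) := by
    intro q x
    have hiff : ∀ s, CondS s q x ↔ ((rnk (val q x ∘ s) 0 : ℝ) ≤ α * ((K : ℝ) + 1)) := by
      intro s
      have hr : (rnk (val q x ∘ s) 0 : ℝ)
          = 1 + ∑ l : Fin K, if val q x (s 0) ≤ val q x (s l.succ) then (1 : ℝ) else 0 := by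
        rw [rnk, card_filter_real, Fin.sum_univ_succ]
        simp [Function.comp]
      simp only [hCondS, hr, div_le_iff₀ hKpos]
    have h1 := sym_count (Γ := Equiv.Perm (Fin (R + 1))) (K := K) (val q x) (α * ((K : ℝ) + 1))
      (by positivity)
    rw [← hN] at h1
    have h2 : (Finset.univ.filter fun s : Fin (K + 1) → Equiv.Perm (Fin (R + 1)) =>
        CondS s q x).card = (Finset.univ.filter
          fun s : Fin (K + 1) → Equiv.Perm (Fin (R + 1)) =>
            (rnk (val q x ∘ s) 0 : ℝ) ≤ α * ((K : ℝ) + 1)).card := by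
      rw [Finset.filter_congr (fun s _ => hiff s)]
    rw [h2]
    exact le_of_mul_le_mul_right (h1.trans_eq (by ring)) hKpos
  -- integrate the counting bound
  have hsum_bound : ∀ q, ∑ s : Fin (K + 1) → Equiv.Perm (Fin (R + 1)),
      μx {x | CondS s q x} ≤ ENNReal.ofReal α * (N : ℝ≥0∞) ^ (K + 1) := by
    intro q
    have hsum_eq : ∑ s : Fin (K + 1) → Equiv.Perm (Fin (R + 1)), μx {x | CondS s q x}
        = ∫⁻ x, (∑ s : Fin (K + 1) → Equiv.Perm (Fin (R + 1)),
            Set.indicator {x' | CondS s q x'} (fun _ => (1 : ℝ≥0∞)) x) ∂μx := by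
      rw [lintegral_finset_sum _ (fun s _ => measurable_const.indicator (hCondSmeas s q))]
      exact Finset.sum_congr rfl fun s _ => (lintegral_indicator_one (hCondSmeas s q)).symm
    rw [hsum_eq]
    have hpt : ∀ x, (∑ s : Fin (K + 1) → Equiv.Perm (Fin (R + 1)),
        Set.indicator {x' | CondS s q x'} (fun _ => (1 : ℝ≥0∞)) x)
          ≤ ENNReal.ofReal (α * (N : ℝ) ^ (K + 1)) := by
      intro x
      have he : (∑ s : Fin (K + 1) → Equiv.Perm (Fin (R + 1)),
          Set.indicator {x' | CondS s q x'} (fun _ => (1 : ℝ≥0∞)) x)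
            = ((Finset.univ.filter fun s : Fin (K + 1) → Equiv.Perm (Fin (R + 1)) =>
                CondS s q x).card : ℝ≥0∞) := by
        rw [Finset.card_filter, Nat.cast_sum]
        refine Finset.sum_congr rfl fun s _ => ?_
        rw [Set.indicator_apply]
        by_cases hcs : CondS s q x <;> simp [hcs]
      rw [he]
      calc ((Finset.univ.filter fun s : Fin (K + 1) → Equiv.Perm (Fin (R + 1)) =>
            CondS s q x).card : ℝ≥0∞)
          = ENNReal.ofReal (((Finset.univ.filter
              fun s : Fin (K + 1) → Equiv.Perm (Fin (R + 1)) =>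
                CondS s q x).card : ℝ)) := by rw [ENNReal.ofReal_natCast]
        _ ≤ ENNReal.ofReal (α * (N : ℝ) ^ (K + 1)) :=
            ENNReal.ofReal_le_ofReal (hcount q x)
    calc (∫⁻ x, (∑ s : Fin (K + 1) → Equiv.Perm (Fin (R + 1)),
        Set.indicator {x' | CondS s q x'} (fun _ => (1 : ℝ≥0∞)) x) ∂μx)
        ≤ ∫⁻ _x, ENNReal.ofReal (α * (N : ℝ) ^ (K + 1)) ∂μx := lintegral_mono hpt
      _ = ENNReal.ofReal (α * (N : ℝ) ^ (K + 1)) := by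
          rw [lintegral_const, measure_univ, mul_one]
      _ = ENNReal.ofReal α * (N : ℝ≥0∞) ^ (K + 1) := by
          rw [ENNReal.ofReal_mul hα0.le, ENNReal.ofReal_pow (by positivity),
            ENNReal.ofReal_natCast]
  -- total mass of the permutation weights
  have hcQsum : ∑ _q : (mr : Fin M × Fin R) → Equiv.Perm {t : Fin T // t ∈ B mr.1}, cQ
      = 1 := by
    calc (∑ _q : (mr : Fin M × Fin R) → Equiv.Perm {t : Fin T // t ∈ B mr.1}, cQ)
        = ∑ q : (mr : Fin M × Fin R) → Equiv.Perm {t : Fin T // t ∈ B mr.1}, Ppi {q} :=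
          Finset.sum_congr rfl fun q _ => (hPpiq q).symm
      _ = Ppi Set.univ := sum_singleton_eq_univ Ppi
      _ = 1 := measure_univ
  -- main bound on the canonical space
  have hmain : (Tpi.prod (Ppi.prod μx)) Sev ≤ ENNReal.ofReal α := by
    calc (Tpi.prod (Ppi.prod μx)) Sev
        = ∑ τf, Am (Fin.cons 1 τf) * ((N : ℝ≥0∞))⁻¹ ^ K := hdecomp
      _ = (∑ τf, Am (Fin.cons 1 τf)) * ((N : ℝ≥0∞))⁻¹ ^ K := by rw [Finset.sum_mul]
      _ = ((N : ℝ≥0∞))⁻¹ ^ (K + 1) * ∑ s : Fin (K + 1) → Equiv.Perm (Fin (R + 1)), Am s := by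
          have h4 : (∑ τf, Am (Fin.cons 1 τf))
              = ((N : ℝ≥0∞))⁻¹ * ∑ s : Fin (K + 1) → Equiv.Perm (Fin (R + 1)), Am s := by
            rw [hres, ← mul_assoc, ENNReal.inv_mul_cancel hN0 hNtop, one_mul]
          rw [h4]; ring
      _ ≤ ((N : ℝ≥0∞))⁻¹ ^ (K + 1) * (ENNReal.ofReal α * (N : ℝ≥0∞) ^ (K + 1)) := by
          refine mul_le_mul_right ?_ _
          calc (∑ s : Fin (K + 1) → Equiv.Perm (Fin (R + 1)), Am s)
              = ∑ q, (∑ s : Fin (K + 1) → Equiv.Perm (Fin (R + 1)),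
                  μx {x | CondS s q x}) * cQ := by
                simp only [hAm]
                rw [Finset.sum_comm]
                exact Finset.sum_congr rfl fun q _ => (Finset.sum_mul _ _ _).symm
            _ ≤ ∑ _q : (mr : Fin M × Fin R) → Equiv.Perm {t : Fin T // t ∈ B mr.1},
                  (ENNReal.ofReal α * (N : ℝ≥0∞) ^ (K + 1)) * cQ :=
                Finset.sum_le_sum fun q _ => mul_le_mul_left (hsum_bound q) _
            _ = (ENNReal.ofReal α * (N : ℝ≥0∞) ^ (K + 1))
                  * ∑ _q : (mr : Fin M × Fin R) →
                      Equiv.Perm {t : Fin T // t ∈ B mr.1}, cQ := by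
                rw [← Finset.mul_sum]
            _ = ENNReal.ofReal α * (N : ℝ≥0∞) ^ (K + 1) := by rw [hcQsum, mul_one]
      _ = ENNReal.ofReal α := by
          rw [mul_comm (ENNReal.ofReal α) ((N : ℝ≥0∞) ^ (K + 1)), ← mul_assoc, ← mul_pow,
            ENNReal.inv_mul_cancel hN0 hNtop, one_pow, one_mul]
  rw [hpre, ← Measure.map_apply hZmeas hSevmeas, hτ, hπ]
  exact hmain
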